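/- arXiv:0808.2839 — 7 statements merged into one kernel-verified Lean document; each statement's English description precedes it below -/
import Mathlib

section
/- The pseudoquandle of normal subgroups of the quaternion group Q₈ is not a quandle: there exist normal subgroups p and q of Q₈ such that no normal subgroup r satisfies r * q = p. Specifically, taking p = ⟨i⟩ and q = ⟨j⟩, there is no normal subgroup r of Q₈ with r * q = p. -/
open Pointwise

lemma normal_zpowers_of_conj_gen {G} [Group G] (g : G)
    (h : ∀ x : G, x * g * x⁻¹ ∈ Subgroup.zpowers g) : (Subgroup.zpowers g).Normal := by
  constructor
  intro y hy x
  obtain ⟨m, rfl⟩ := hy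
  rw [← conj_zpow]
  exact Subgroup.zpow_mem _ (h x) m

/-- In the quaternion group `Q₈`, with `p = ⟨i⟩` and `q = ⟨j⟩` (both normal),
there is no normal subgroup `r` with `r * q = p`; hence the pseudoquandle of
normal subgroups of `Q₈` is not a quandle. -/
theorem quaternion_pseudoquandle_not_quandle :
    ∃ p q : Subgroup (QuaternionGroup 2),
      p = Subgroup.zpowers (QuaternionGroup.a 1) ∧
      q = Subgroup.zpowers (QuaternionGroup.xa 0) ∧
      p.Normal ∧ q.Normal ∧
      ¬ ∃ r : Subgroup (QuaternionGroup 2), r.Normal ∧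
          (r : Set (QuaternionGroup 2)) * (q : Set (QuaternionGroup 2))
            = (p : Set (QuaternionGroup 2)) := by
  refine ⟨Subgroup.zpowers (QuaternionGroup.a 1),
    Subgroup.zpowers (QuaternionGroup.xa 0), rfl, rfl, ?_, ?_, ?_⟩
  · apply normal_zpowers_of_conj_gen
    rintro (i | i) <;> fin_cases i <;>
      first
        | exact ⟨1, by decide⟩
        | exact ⟨-1, by decide⟩
  · apply normal_zpowers_of_conj_gen
    rintro (i | i) <;> fin_cases i <;>
      first
        | exact ⟨1, by decide⟩
        | exact ⟨3, by decide⟩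
  · rintro ⟨r, -, hr⟩
    have hx : QuaternionGroup.xa 0 ∈
        ((Subgroup.zpowers (QuaternionGroup.a 1) : Subgroup (QuaternionGroup 2)) :
          Set (QuaternionGroup 2)) := by
      rw [← hr]
      simpa using Set.mul_mem_mul r.one_mem (Subgroup.mem_zpowers (QuaternionGroup.xa 0))
    rw [SetLike.mem_coe, ← mem_powers_iff_mem_zpowers] at hx
    obtain ⟨k, hk⟩ := hx
    simp only [QuaternionGroup.a_one_pow] at hk
    cases hk
end

section
/- In a pseudoquandle P, the kernel ker(p) = {q ∈ P : p * q = q * p = p} of any element p is closed under the operation: if x, y ∈ ker(p) then x * y ∈ ker(p). -/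
/-- In a pseudoquandle, the kernel `ker p = {q | p*q = q*p = p}` is closed
under the operation. -/
theorem ker_closed {P : Type*} (op : P → P → P)
    (idem : ∀ x, op x x = x)
    (dist : ∀ x y z, op (op x y) z = op (op x z) (op y z))
    (p x y : P)
    (hx : x ∈ {q : P | op p q = p ∧ op q p = p})
    (hy : y ∈ {q : P | op p q = p ∧ op q p = p}) :
    op x y ∈ {q : P | op p q = p ∧ op q p = p} := by
  obtain ⟨hx1, hx2⟩ := hx
  obtain ⟨hy1, hy2⟩ := hy
  constructor
  · have h := dist p x y
    rw [hx1, hy1] at h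
    exact h.symm
  · have h := dist x y p
    rw [hx2, hy2, idem] at h
    exact h
end

section
/- Let P = {p₁, ..., pₙ} be a finite commutative pseudoquandle with ker(p₁) ⊆ ker(p₂) ⊆ ... ⊆ ker(pₙ). Then P = ker(pₙ), and for each i, coker(pᵢ) = P \ ker(pᵢ) is closed under the operation. -/
/-- If a finite commutative pseudoquandle `P = {p₀, …, pₙ}` has ascending
kernels `ker p₀ ⊆ … ⊆ ker pₙ`, then `P = ker pₙ` and every cokernel
`coker pᵢ` is closed under the operation. -/
theorem ascending_kernels {P : Type*} [Fintype P] (op : P → P → P)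
    (comm : ∀ x y, op x y = op y x)
    (idem : ∀ x, op x x = x)
    (dist : ∀ x y z, op (op x y) z = op (op x z) (op y z))
    (n : ℕ) (e : P ≃ Fin (n + 1))
    (chain : ∀ i j : Fin (n + 1), i ≤ j →
      {q : P | op (e.symm i) q = e.symm i} ⊆ {q : P | op (e.symm j) q = e.symm j}) :
    (∀ q : P, op (e.symm (Fin.last n)) q = e.symm (Fin.last n)) ∧
    (∀ p x y : P, op p x ≠ p → op p y ≠ p → op p (op x y) ≠ p) := by
  -- From the chain and idempotence, any two elements are comparable:
  -- `op a b = a` or `op a b = b`.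
  have key : ∀ a b : P, op a b = a ∨ op a b = b := by
    intro a b
    have ha : a ∈ {q : P | op (e.symm (e a)) q = e.symm (e a)} := by
      simp [Set.mem_setOf_eq, e.symm_apply_apply, idem]
    have hb : b ∈ {q : P | op (e.symm (e b)) q = e.symm (e b)} := by
      simp [Set.mem_setOf_eq, e.symm_apply_apply, idem]
    rcases le_total (e a) (e b) with h | h
    · right
      have := chain (e a) (e b) h ha
      simpa [Set.mem_setOf_eq, e.symm_apply_apply, comm a b] using this
    · left
      have := chain (e b) (e a) h hb
      simpa [Set.mem_setOf_eq, e.symm_apply_apply] using this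
  constructor
  · intro q
    have hq : q ∈ {r : P | op (e.symm (e q)) r = e.symm (e q)} := by
      simp [Set.mem_setOf_eq, e.symm_apply_apply, idem]
    exact chain (e q) (Fin.last n) (Fin.le_last _) hq
  · intro p x y hx hy h
    rcases key x y with hxy | hxy <;> rw [hxy] at h
    · exact hx h
    · exact hy h
end

section
/- In a pseudoquandle P, for any p, q ∈ P, ker(p) ∩ ker(q) ⊆ ker(p * q). -/
/-- In a pseudoquandle, `ker p ∩ ker q ⊆ ker (p * q)`. -/
theorem ker_inter_subset {P : Type*} (op : P → P → P)
    (idem : ∀ x, op x x = x)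
    (dist : ∀ x y z, op (op x y) z = op (op x z) (op y z))
    (p q : P) :
    {s : P | op p s = p ∧ op s p = p} ∩ {s : P | op q s = q ∧ op s q = q}
      ⊆ {s : P | op (op p q) s = op p q ∧ op s (op p q) = op p q} := by
  rintro s ⟨⟨hps, hsp⟩, ⟨hqs, hsq⟩⟩
  have h1 : op (op p q) s = op p q := by
    rw [dist p q s, hps, hqs]
  refine ⟨h1, ?_⟩
  set t := op p q with ht
  -- (a) q*t = t
  have ha : op q t = t := by
    have := dist s p q
    rw [hsp, hsq] at this
    exact this.symm
  set u := op s t with hu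
  -- (b) t*u = t
  have hb : op t u = t := by
    have := dist q s t
    rw [hqs, ha] at this
    exact this.symm
  -- (c) u*t = t
  have hc : op u t = t := by
    have h := dist s q t
    rw [hsq] at h
    -- h : op q t = op u (op q t)
    rw [ha] at h
    exact h.symm
  -- (d) chain
  have hd : u = op (op s u) t := by
    have h := dist s t u
    -- h : op (op s t) u = op (op s u) (op t u)
    rw [hb] at h
    calc u = op u u := (idem u).symm
    _ = op (op s u) t := h
  have he : op (op s u) t = t := by
    have h := dist s u t
    rw [hc] at h
    -- h : op (op s u) t = op (op s t) t
    rw [h, ← hu, hc]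
  rw [hd, he]
end

section
/- In a commutative pseudoquandle P, if p ∈ ker(q) then ker(p) ⊆ ker(q). -/
/-- In a commutative pseudoquandle, if `p ∈ ker q` then `ker p ⊆ ker q`. -/
theorem ker_mono {P : Type*} (op : P → P → P)
    (comm : ∀ x y, op x y = op y x)
    (idem : ∀ x, op x x = x)
    (dist : ∀ x y z, op (op x y) z = op (op x z) (op y z))
    (p q : P) (hpq : op p q = q) :
    {s : P | op s p = p} ⊆ {s : P | op s q = q} := by
  intro s hs
  have hs : op s p = p := hs
  show op s q = q
  calc op s q = op s (op p q) := by rw [hpq]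
    _ = op (op p q) s := comm _ _
    _ = op (op p s) (op q s) := dist _ _ _
    _ = op p (op s q) := by rw [comm p s, hs, comm q s]
    _ = op (op s q) p := comm _ _
    _ = op (op s p) (op q p) := dist _ _ _
    _ = op p q := by rw [hs, comm q p, hpq]; exact hpq
    _ = q := hpq
end

section
/- In a pseudoquandle P, for every p ∈ P the kernel satisfies ker(p) * ker(p) = ker(p), where A * B = {a * b : a ∈ A, b ∈ B}. -/
/-- In a pseudoquandle, `ker p * ker p = ker p`, where
`A * B = {a * b | a ∈ A, b ∈ B}`. -/
theorem ker_sq {P : Type*} (op : P → P → P)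
    (idem : ∀ x, op x x = x)
    (dist : ∀ x y z, op (op x y) z = op (op x z) (op y z))
    (p : P) :
    Set.image2 op {q : P | op p q = p ∧ op q p = p} {q : P | op p q = p ∧ op q p = p}
      = {q : P | op p q = p ∧ op q p = p} := by
  ext x
  constructor
  · rintro ⟨a, ⟨ha1, ha2⟩, b, ⟨hb1, hb2⟩, rfl⟩
    constructor
    · have := dist p a b
      rw [ha1, hb1] at this
      exact this.symm
    · rw [dist, ha2, hb2, idem]
  · rintro ⟨h1, h2⟩
    exact ⟨x, ⟨h1, h2⟩, x, ⟨h1, h2⟩, idem x⟩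
end

section
/- In a commutative pseudoquandle P, the map p ↦ ker(p) is injective: ker(p) = ker(q) implies p = q. -/
/-- In a commutative pseudoquandle, the map `p ↦ ker p` is injective. -/
theorem ker_injective {P : Type*} (op : P → P → P)
    (comm : ∀ x y, op x y = op y x)
    (idem : ∀ x, op x x = x)
    (dist : ∀ x y z, op (op x y) z = op (op x z) (op y z))
    (p q : P)
    (h : {s : P | op s p = p} = {s : P | op s q = q}) :
    p = q := by
  have hp : op p q = q := by
    have : p ∈ {s : P | op s q = q} := h ▸ (idem p : op p p = p)
    exact this
  have hq : op q p = p := by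
    have : q ∈ {s : P | op s p = p} := h.symm ▸ (idem q : op q q = q)
    exact this
  rw [← hq, comm, hp]
end
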